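/- Let Z ∈ C = {Z ∈ R^{n×n} : Z ⪰ 0, Z ≥ 0 entrywise, diag(Z) ⪯ I_n, Σ_{i,j} Z_{ij} ≤ λ} for the community detection SDP, and suppose E[A] satisfies E[A]_{ij} ≥ p for i ∼ j (i ≠ j), E[A]_{ii} = 1, and E[A]_{ij} ≤ q for i ≁ j, with 0 < q < p < 1. Let Z* be the membership matrix (Z*_{ij} = 1 iff i ∼ j) and λ = Σ_{i,j} Z*_{ij}. Then for all Z ∈ C, ⟨E[A], Z* − Z⟩ ≥ ((p − q)/2)·‖Z* − Z‖₁. -/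

import Mathlib

open Finset

/-- trace inner product `⟨M,N⟩ = Tr(M Nᵀ)` on real matrices -/
noncomputable def ip {n : ℕ} (M N : Matrix (Fin n) (Fin n) ℝ) : ℝ :=
  ∑ i, ∑ j, M i j * N i j

/-- global ℓ₁ curvature of the excess risk in community detection
(Lemma 7.2 of Guédon–Vershynin).  Communities are encoded by `c : Fin n → Fin K`. -/
theorem stmt_17 {n K : ℕ} (c : Fin n → Fin K) (p q : ℝ)
    (hq0 : 0 < q) (hqp : q < p) (hp1 : p < 1)
    (EA : Matrix (Fin n) (Fin n) ℝ)
    (hEAin : ∀ i j, i ≠ j → c i = c j → p ≤ EA i j)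
    (hEAdiag : ∀ i, EA i i = 1)
    (hEAout : ∀ i j, c i ≠ c j → EA i j ≤ q)
    (Zstar : Matrix (Fin n) (Fin n) ℝ)
    (hZstar : ∀ i j, Zstar i j = if c i = c j then 1 else 0)
    (lam : ℝ) (hlam : lam = ∑ i, ∑ j, Zstar i j)
    (Z : Matrix (Fin n) (Fin n) ℝ)
    (hZpsd : Z.PosSemidef)
    (hZpos : ∀ i j, 0 ≤ Z i j)
    (hZdiag : ∀ i, Z i i ≤ 1)
    (hZsum : ∑ i, ∑ j, Z i j ≤ lam) :
    ((p - q) / 2) * (∑ i, ∑ j, |Zstar i j - Z i j|) ≤ ip EA (Zstar - Z) := by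
  have hsym : ∀ i j, Z j i = Z i j := by
    intro i j
    have h := congrFun (congrFun hZpsd.1 j) i
    simpa [Matrix.conjTranspose_apply] using h.symm
  have hZle1 : ∀ i j, Z i j ≤ 1 := by
    intro i j
    by_cases hij : i = j
    · subst hij; exact hZdiag i
    · have h := hZpsd.dotProduct_mulVec_nonneg (Pi.single i 1 - Pi.single j 1)
      simp [Matrix.mulVec_sub, dotProduct_sub, sub_dotProduct,
        Matrix.mulVec_single, single_dotProduct] at h
      linarith [hZdiag i, hZdiag j, hsym i j]

  -- split sums over pairs
  classical
  set S : Finset (Fin n × Fin n) := Finset.univ ×ˢ Finset.univ with hS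
  have hsum2 : ∀ (f : Fin n → Fin n → ℝ),
      (∑ i, ∑ j, f i j) = ∑ x ∈ S, f x.1 x.2 := by
    intro f; rw [hS, Finset.sum_product]
  set Inn : Finset (Fin n × Fin n) := S.filter (fun x => c x.1 = c x.2) with hIn
  set Outt : Finset (Fin n × Fin n) := S.filter (fun x => ¬ c x.1 = c x.2) with hOut
  have hsplit : ∀ (g : Fin n × Fin n → ℝ),
      (∑ x ∈ S, g x) = (∑ x ∈ Inn, g x) + (∑ x ∈ Outt, g x) := by
    intro g; rw [hIn, hOut, Finset.sum_filter_add_sum_filter_not]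
  set Sin : ℝ := ∑ x ∈ Inn, (Zstar x.1 x.2 - Z x.1 x.2) with hSin
  set Sout : ℝ := ∑ x ∈ Outt, Z x.1 x.2 with hSout
  have hInmem : ∀ x ∈ Inn, c x.1 = c x.2 := fun x hx => (Finset.mem_filter.mp hx).2
  have hOutmem : ∀ x ∈ Outt, ¬ c x.1 = c x.2 := fun x hx => (Finset.mem_filter.mp hx).2
  have hSin0 : 0 ≤ Sin := Finset.sum_nonneg fun x hx => by
    have := hZle1 x.1 x.2
    rw [hZstar x.1 x.2, if_pos (hInmem x hx)]; linarith
  have hSout0 : 0 ≤ Sout := Finset.sum_nonneg fun x _ => hZpos x.1 x.2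
  -- ℓ₁ norm
  have habs : (∑ i, ∑ j, |Zstar i j - Z i j|) = Sin + Sout := by
    rw [hsum2 (fun i j => |Zstar i j - Z i j|), hsplit]
    congr 1
    · exact Finset.sum_congr rfl fun x hx => by
        rw [hZstar x.1 x.2, if_pos (hInmem x hx)]
        exact abs_of_nonneg (by have := hZle1 x.1 x.2; linarith)
    · exact Finset.sum_congr rfl fun x hx => by
        rw [hZstar x.1 x.2, if_neg (hOutmem x hx)]
        rw [zero_sub, abs_neg]
        exact abs_of_nonneg (hZpos x.1 x.2)
  -- Sout ≤ Sin
  have hle : Sout ≤ Sin := by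
    have h1 : (∑ i, ∑ j, Z i j) = (∑ x ∈ Inn, Z x.1 x.2) + Sout := by
      rw [hsum2 (fun i j => Z i j), hsplit]
    have h2 : lam = (∑ x ∈ Inn, Zstar x.1 x.2) := by
      rw [hlam, hsum2 (fun i j => Zstar i j), hsplit]
      have : (∑ x ∈ Outt, Zstar x.1 x.2) = 0 :=
        Finset.sum_eq_zero fun x hx => by rw [hZstar x.1 x.2, if_neg (hOutmem x hx)]
      rw [this, add_zero]
    have : (∑ x ∈ Inn, Z x.1 x.2) + Sout ≤ ∑ x ∈ Inn, Zstar x.1 x.2 := by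
      rw [← h1, ← h2]; exact hZsum
    have hdiff : Sin = (∑ x ∈ Inn, Zstar x.1 x.2) - (∑ x ∈ Inn, Z x.1 x.2) := by
      rw [hSin, Finset.sum_sub_distrib]
    linarith
  -- lower bound on ip
  have hip : p * Sin - q * Sout ≤ ip EA (Zstar - Z) := by
    have : ip EA (Zstar - Z)
        = (∑ x ∈ Inn, EA x.1 x.2 * (Zstar x.1 x.2 - Z x.1 x.2))
          + (∑ x ∈ Outt, EA x.1 x.2 * (Zstar x.1 x.2 - Z x.1 x.2)) := by
      rw [ip, hsum2 (fun i j => EA i j * ((Zstar - Z) i j)), hsplit]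
      simp [Matrix.sub_apply]
    rw [this]
    have h1 : p * Sin ≤ ∑ x ∈ Inn, EA x.1 x.2 * (Zstar x.1 x.2 - Z x.1 x.2) := by
      rw [hSin, Finset.mul_sum]
      refine Finset.sum_le_sum fun x hx => ?_
      have hz : 0 ≤ Zstar x.1 x.2 - Z x.1 x.2 := by
        rw [hZstar x.1 x.2, if_pos (hInmem x hx)]
        have := hZle1 x.1 x.2; linarith
      have hEA : p ≤ EA x.1 x.2 := by
        by_cases hd : x.1 = x.2
        · rw [hd, hEAdiag]; linarith
        · exact hEAin x.1 x.2 hd (hInmem x hx)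
      exact mul_le_mul_of_nonneg_right hEA hz
    have h2 : -(q * Sout) ≤ ∑ x ∈ Outt, EA x.1 x.2 * (Zstar x.1 x.2 - Z x.1 x.2) := by
      rw [hSout, Finset.mul_sum, ← Finset.sum_neg_distrib]
      refine Finset.sum_le_sum fun x hx => ?_
      have hzs : Zstar x.1 x.2 = 0 := by rw [hZstar x.1 x.2, if_neg (hOutmem x hx)]
      rw [hzs, zero_sub, mul_neg]
      have := hEAout x.1 x.2 (hOutmem x hx)
      have := hZpos x.1 x.2
      nlinarith
    linarith
  rw [habs]
  nlinarith [mul_nonneg (by linarith : (0:ℝ) ≤ p + q) (by linarith : (0:ℝ) ≤ Sin - Sout)]
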